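/- The set of points of the Brieskorn manifold W_k^5 = {z_0^k + z_1^2 + z_2^2 + z_3^2 = 0} ∩ S^7(√2) that are fixed by all rotations about the z_1-axis (i.e. fixed by the SO(3)-subgroup of matrices fixing the first standard basis vector of R^3, acting on coordinates (z_1,z_2,z_3)) is exactly { (e^{iφ}, ±i e^{ikφ/2}, 0, 0) : 0 ≤ φ < 2π }. This set is connected if k is odd and has exactly two connected components if k is even. -/

import Mathlib

open Matrix

/-- The action of a real `3×3` matrix on the last three coordinates of `ℂ⁴`, applied
simultaneously to real and imaginary parts, fixing the coordinate `z₀`. -/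
noncomputable def so3ActC4 (A : Matrix (Fin 3) (Fin 3) ℝ) (z : Fin 4 → ℂ) : Fin 4 → ℂ :=
  fun j => Fin.cases (z 0)
    (fun i : Fin 3 =>
      ((A.mulVec (fun l : Fin 3 => (z l.succ).re) i : ℝ) : ℂ)
        + ((A.mulVec (fun l : Fin 3 => (z l.succ).im) i : ℝ) : ℂ) * Complex.I) j

/-- The set of points of the Brieskorn manifold
`W_k⁵ = {z₀ᵏ + z₁² + z₂² + z₃² = 0} ∩ S⁷(√2)` fixed by all rotations about the
`z₁`-axis (the `SO(3)`-matrices fixing the first standard basis vector of `ℝ³`). -/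
noncomputable def axisFixedSet (k : ℕ) : Set (Fin 4 → ℂ) :=
  {z | (z 0 ^ k + z 1 ^ 2 + z 2 ^ 2 + z 3 ^ 2 = 0 ∧
        ∑ j, Complex.normSq (z j) = 2) ∧
    ∀ A : Matrix (Fin 3) (Fin 3) ℝ, Aᵀ * A = 1 → A.det = 1 →
      A.mulVec (fun i => if i = 0 then 1 else 0) = (fun i => if i = 0 then 1 else 0) →
      so3ActC4 A z = z}

/-- The "+" branch `(e^{iφ}, i e^{ikφ/2}, 0, 0)`. -/
noncomputable def bfp (k : ℕ) (φ : ℝ) : Fin 4 → ℂ :=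
  ![Complex.exp (φ * Complex.I),
    Complex.I * Complex.exp (((k : ℝ) * φ / 2 : ℝ) * Complex.I), 0, 0]

/-- The "−" branch `(e^{iφ}, −i e^{ikφ/2}, 0, 0)`. -/
noncomputable def bfn (k : ℕ) (φ : ℝ) : Fin 4 → ℂ :=
  ![Complex.exp (φ * Complex.I),
    -(Complex.I * Complex.exp (((k : ℝ) * φ / 2 : ℝ) * Complex.I)), 0, 0]

lemma bfp_cont (k : ℕ) : Continuous (bfp k) := by
  apply continuous_pi
  intro j
  fin_cases j <;> simp [bfp] <;> fun_prop

lemma bfn_cont (k : ℕ) : Continuous (bfn k) := by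
  apply continuous_pi
  intro j
  fin_cases j <;> simp [bfn] <;> fun_prop

lemma bfn_eq_bfp {k : ℕ} (hko : Odd k) (φ : ℝ) : bfn k φ = bfp k (φ + 2 * Real.pi) := by
  have h0 : Complex.exp ((φ : ℂ) * Complex.I)
      = Complex.exp (((φ + 2 * Real.pi : ℝ) : ℂ) * Complex.I) := by
    rw [show ((φ + 2 * Real.pi : ℝ) : ℂ) * Complex.I
        = (φ : ℂ) * Complex.I + 2 * (Real.pi : ℂ) * Complex.I by push_cast; ring,
      Complex.exp_add, Complex.exp_two_pi_mul_I, mul_one]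
  have h1 : -(Complex.I * Complex.exp ((((k : ℝ) * φ / 2 : ℝ) : ℂ) * Complex.I))
      = Complex.I * Complex.exp ((((k : ℝ) * (φ + 2 * Real.pi) / 2 : ℝ) : ℂ) * Complex.I) := by
    rw [show (((k : ℝ) * (φ + 2 * Real.pi) / 2 : ℝ) : ℂ) * Complex.I
        = (((k : ℝ) * φ / 2 : ℝ) : ℂ) * Complex.I + (k : ℂ) * ((Real.pi : ℂ) * Complex.I) by
          push_cast; ring,
      Complex.exp_add, Complex.exp_nat_mul, Complex.exp_pi_mul_I, hko.neg_one_pow]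
    ring
  unfold bfn bfp
  rw [h0, h1]

lemma bfp_P {k m : ℕ} (hm : k = m + m) (φ : ℝ) :
    bfp k φ 1 = Complex.I * (bfp k φ 0) ^ m := by
  simp only [bfp, Matrix.cons_val_one, Matrix.head_cons, Matrix.cons_val_zero]
  rw [← Complex.exp_nat_mul,
    show (m : ℂ) * ((φ : ℂ) * Complex.I) = (((k : ℝ) * φ / 2 : ℝ) : ℂ) * Complex.I by
      subst hm; push_cast; ring]

lemma bfn_P {k m : ℕ} (hm : k = m + m) (φ : ℝ) :
    bfn k φ 1 = -(Complex.I * (bfn k φ 0) ^ m) := by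
  simp only [bfn, Matrix.cons_val_one, Matrix.head_cons, Matrix.cons_val_zero]
  rw [← Complex.exp_nat_mul,
    show (m : ℂ) * ((φ : ℂ) * Complex.I) = (((k : ℝ) * φ / 2 : ℝ) : ℂ) * Complex.I by
      subst hm; push_cast; ring]

lemma sq_aux (k : ℕ) (φ : ℝ) :
    (Complex.I * Complex.exp ((((k : ℝ) * φ / 2 : ℝ) : ℂ) * Complex.I)) ^ 2
      = -(Complex.exp ((φ : ℂ) * Complex.I) ^ k) := by
  rw [mul_pow, Complex.I_sq, pow_two, ← Complex.exp_add, ← Complex.exp_nat_mul,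
    show ((((k : ℝ) * φ / 2 : ℝ) : ℂ) * Complex.I + (((k : ℝ) * φ / 2 : ℝ) : ℂ) * Complex.I)
        = (k : ℂ) * ((φ : ℂ) * Complex.I) by push_cast; ring]
  ring

/-- points in the fixed set have z₂ = z₃ = 0 -/
lemma fix23 {k : ℕ} {z : Fin 4 → ℂ} (hz : z ∈ axisFixedSet k) : z 2 = 0 ∧ z 3 = 0 := by
  obtain ⟨-, hfix⟩ := hz
  set A : Matrix (Fin 3) (Fin 3) ℝ := Matrix.diagonal ![1, -1, -1] with hA
  have h1 : Aᵀ * A = 1 := by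
    rw [hA, Matrix.diagonal_transpose, Matrix.diagonal_mul_diagonal]
    have : (fun i => (![1, -1, -1] : Fin 3 → ℝ) i * ![1, -1, -1] i) = fun _ : Fin 3 => (1:ℝ) := by
      funext i; fin_cases i <;> norm_num
    rw [this, Matrix.diagonal_one]
  have h2 : A.det = 1 := by
    rw [hA, Matrix.det_diagonal]
    simp [Fin.prod_univ_three]
  have h3 : A.mulVec (fun i => if i = 0 then 1 else 0) = (fun i => if i = 0 then 1 else 0) := by
    funext i
    rw [hA, Matrix.mulVec_diagonal]
    fin_cases i <;> simp
  have hfx := hfix A h1 h2 h3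
  constructor
  · have h := congrFun hfx (Fin.succ 1)
    simp only [so3ActC4, Fin.cases_succ, hA, Matrix.mulVec_diagonal] at h
    norm_num at h
    linear_combination (-h - Complex.re_add_im (z 2)) / 2
  · have h := congrFun hfx (Fin.succ 2)
    simp only [so3ActC4, Fin.cases_succ, hA, Matrix.mulVec_diagonal] at h
    rw [show (Fin.succ 2 : Fin 4) = (3 : Fin 4) from rfl] at h
    norm_num [Matrix.cons_val_two, Matrix.tail_cons, Matrix.head_cons] at h
    linear_combination (-h - Complex.re_add_im (z 3)) / 2

/-- points with z₂ = z₃ = 0 are fixed by all axis rotations -/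
lemma fixed_of {z : Fin 4 → ℂ} (h2 : z 2 = 0) (h3 : z 3 = 0) :
    ∀ A : Matrix (Fin 3) (Fin 3) ℝ, Aᵀ * A = 1 → A.det = 1 →
      A.mulVec (fun i => if i = 0 then 1 else 0) = (fun i => if i = 0 then 1 else 0) →
      so3ActC4 A z = z := by
  intro A _ _ hA
  have hA0 : ∀ i, A i 0 = if i = 0 then 1 else 0 := fun i => by
    simpa [Matrix.mulVec, dotProduct, Fin.sum_univ_three] using congrFun hA i
  have h3' : z (Fin.succ 2) = 0 := h3
  have h2' : z (Fin.succ 1) = 0 := h2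
  funext j
  refine Fin.cases ?_ (fun i => ?_) j
  · simp [so3ActC4]
  · simp only [so3ActC4, Fin.cases_succ]
    have hre : A.mulVec (fun l : Fin 3 => (z l.succ).re) i = (if i = 0 then 1 else 0) * (z 1).re := by
      simp [Matrix.mulVec, dotProduct, Fin.sum_univ_three, hA0 i, h2, h3, h2', h3']
    have him : A.mulVec (fun l : Fin 3 => (z l.succ).im) i = (if i = 0 then 1 else 0) * (z 1).im := by
      simp [Matrix.mulVec, dotProduct, Fin.sum_univ_three, hA0 i, h2, h3, h2', h3']
    rw [hre, him]
    fin_cases i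
    · simpa using Complex.re_add_im (z 1)
    · simpa using h2.symm
    · simpa using h3.symm

lemma bfp_mem (k : ℕ) (φ : ℝ) : bfp k φ ∈ axisFixedSet k := by
  refine ⟨⟨?_, ?_⟩, fixed_of rfl rfl⟩
  · simp only [bfp, Matrix.cons_val_zero, Matrix.cons_val_one, Matrix.head_cons,
      Matrix.cons_val_two, Matrix.tail_cons, Matrix.cons_val_three]
    rw [sq_aux]; ring
  · simp only [bfp, Fin.sum_univ_four, Matrix.cons_val_zero, Matrix.cons_val_one,
      Matrix.head_cons, Matrix.cons_val_two, Matrix.tail_cons, Matrix.cons_val_three,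
      Complex.normSq_eq_norm_sq, norm_mul, Complex.norm_I,
      Complex.norm_exp_ofReal_mul_I, norm_zero]
    norm_num

lemma bfn_mem (k : ℕ) (φ : ℝ) : bfn k φ ∈ axisFixedSet k := by
  refine ⟨⟨?_, ?_⟩, fixed_of rfl rfl⟩
  · simp only [bfn, Matrix.cons_val_zero, Matrix.cons_val_one, Matrix.head_cons,
      Matrix.cons_val_two, Matrix.tail_cons, Matrix.cons_val_three]
    rw [neg_pow, sq_aux]; ring
  · simp only [bfn, Fin.sum_univ_four, Matrix.cons_val_zero, Matrix.cons_val_one,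
      Matrix.head_cons, Matrix.cons_val_two, Matrix.tail_cons, Matrix.cons_val_three,
      Complex.normSq_eq_norm_sq, norm_mul, Complex.norm_I, norm_neg,
      Complex.norm_exp_ofReal_mul_I, norm_zero]
    norm_num

lemma mem_imp {k : ℕ} (hk : 0 < k) {z : Fin 4 → ℂ} (hz : z ∈ axisFixedSet k) :
    ∃ φ : ℝ, z = bfp k φ ∨ z = bfn k φ := by
  obtain ⟨h2, h3⟩ := fix23 hz
  obtain ⟨⟨heq, hnorm⟩, -⟩ := hz
  have hz1sq : z 1 ^ 2 = -(z 0 ^ k) := by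
    rw [h2, h3] at heq; linear_combination heq
  have hnorm' : Complex.normSq (z 0) + Complex.normSq (z 1) = 2 := by
    simpa [Fin.sum_univ_four, h2, h3] using hnorm
  have habs : ‖z 1‖ ^ 2 = ‖z 0‖ ^ k := by
    have := congrArg norm hz1sq
    simpa [norm_pow, norm_neg] using this
  have hr : ‖z 0‖ = 1 := by
    set r := ‖z 0‖ with hrdef
    have hr0 : 0 ≤ r := norm_nonneg _
    have hsum : r ^ 2 + r ^ k = 2 := by
      rw [Complex.normSq_eq_norm_sq, Complex.normSq_eq_norm_sq, habs] at hnorm'; linarith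
    rcases lt_trichotomy r 1 with h | h | h
    · exfalso
      have ha : r ^ 2 < 1 := pow_lt_one₀ hr0 h (by norm_num)
      have hb : r ^ k < 1 := pow_lt_one₀ hr0 h hk.ne'
      linarith
    · exact h
    · exfalso
      have ha : 1 < r ^ 2 := one_lt_pow₀ h (by norm_num)
      have hb : 1 < r ^ k := one_lt_pow₀ h hk.ne'
      linarith
  refine ⟨(z 0).arg, ?_⟩
  have hz0 : z 0 = Complex.exp (((z 0).arg : ℂ) * Complex.I) := by
    conv_lhs => rw [← Complex.norm_mul_exp_arg_mul_I (z 0)]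
    rw [hr]; simp
  set w := Complex.I * Complex.exp ((((k : ℝ) * (z 0).arg / 2 : ℝ) : ℂ) * Complex.I) with hwdef
  have hw : w ^ 2 = z 1 ^ 2 := by
    rw [hwdef, sq_aux, hz1sq, ← hz0]
  have hfac : (z 1 - w) * (z 1 + w) = 0 := by linear_combination -hw
  rcases mul_eq_zero.mp hfac with h | h
  · exact Or.inl (by
      funext j; fin_cases j
      · exact hz0
      · simpa [bfp, hwdef] using sub_eq_zero.mp h
      · simpa [bfp] using h2
      · simpa [bfp] using h3)
  · exact Or.inr (by
      funext j; fin_cases j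
      · exact hz0
      · simpa [bfn, hwdef] using eq_neg_of_add_eq_zero_left h
      · simpa [bfn] using h2
      · simpa [bfn] using h3)

/-- The fixed-point set of the rotations about the `z₁`-axis on `W_k⁵` is
exactly `{(e^{iφ}, ±i e^{ikφ/2}, 0, 0) : φ ∈ ℝ}`; it is connected when `k` is odd and
has exactly two connected components when `k` is even. -/
theorem brieskorn_axis_fixed_set (k : ℕ) (hk : 0 < k) :
    axisFixedSet k =
      {z | ∃ φ : ℝ,
        z = ![Complex.exp (φ * Complex.I),
              Complex.I * Complex.exp (((k : ℝ) * φ / 2 : ℝ) * Complex.I), 0, 0] ∨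
        z = ![Complex.exp (φ * Complex.I),
              -(Complex.I * Complex.exp (((k : ℝ) * φ / 2 : ℝ) * Complex.I)), 0, 0]} ∧
    (Odd k → IsConnected (axisFixedSet k)) ∧
    (Even k → Nonempty (ConnectedComponents (axisFixedSet k) ≃ Fin 2)) := by
  classical
  have hset : axisFixedSet k = {z | ∃ φ : ℝ, z = bfp k φ ∨ z = bfn k φ} := by
    ext z
    constructor
    · intro hz; exact mem_imp hk hz
    · rintro ⟨φ, rfl | rfl⟩
      · exact bfp_mem k φ
      · exact bfn_mem k φ
  refine ⟨hset, ?_, ?_⟩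
  · -- odd case
    intro hko
    have hrange : axisFixedSet k = Set.range (bfp k) := by
      rw [hset]; ext z
      constructor
      · rintro ⟨φ, rfl | rfl⟩
        · exact ⟨φ, rfl⟩
        · exact ⟨φ + 2 * Real.pi, (bfn_eq_bfp hko φ).symm⟩
      · rintro ⟨φ, rfl⟩; exact ⟨φ, Or.inl rfl⟩
    constructor
    · exact ⟨bfp k 0, hrange ▸ ⟨0, rfl⟩⟩
    · rw [hrange]; exact isPreconnected_range (bfp_cont k)
  · -- even case
    intro hke
    obtain ⟨m, hm⟩ := hke
    have hm0 : m ≠ 0 := by rintro rfl; simp at hm; omega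
    have hz0ne : ∀ z ∈ axisFixedSet k, z 0 ≠ 0 := by
      intro z hz
      rw [hset] at hz
      obtain ⟨φ, rfl | rfl⟩ := hz <;> simp [bfp, bfn, Complex.exp_ne_zero]
    have hcases : ∀ z ∈ axisFixedSet k,
        z 1 = Complex.I * z 0 ^ m ∨ z 1 = -(Complex.I * z 0 ^ m) := by
      intro z hz
      rw [hset] at hz
      obtain ⟨φ, rfl | rfl⟩ := hz
      · exact Or.inl (bfp_P hm φ)
      · exact Or.inr (bfn_P hm φ)
    have hnotboth : ∀ z ∈ axisFixedSet k,
        ¬(z 1 = Complex.I * z 0 ^ m ∧ z 1 = -(Complex.I * z 0 ^ m)) := by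
      rintro z hz ⟨ha, hb⟩
      have h0 := hz0ne z hz
      have hw0 : Complex.I * z 0 ^ m = 0 := by
        linear_combination (ha.symm.trans hb) / 2
      rcases mul_eq_zero.mp hw0 with h | h
      · exact Complex.I_ne_zero h
      · exact h0 (pow_eq_zero_iff hm0 |>.mp h)
    have hCpos : {z | z ∈ axisFixedSet k ∧ z 1 = Complex.I * z 0 ^ m} = Set.range (bfp k) := by
      ext z
      constructor
      · rintro ⟨hz, hP⟩
        rw [hset] at hz
        obtain ⟨φ, rfl | rfl⟩ := hz
        · exact ⟨φ, rfl⟩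
        · exact absurd ⟨hP, bfn_P hm φ⟩ (hnotboth _ (bfn_mem k φ))
      · rintro ⟨φ, rfl⟩
        exact ⟨bfp_mem k φ, bfp_P hm φ⟩
    have hCneg : {z | z ∈ axisFixedSet k ∧ z 1 = -(Complex.I * z 0 ^ m)} = Set.range (bfn k) := by
      ext z
      constructor
      · rintro ⟨hz, hP⟩
        rw [hset] at hz
        obtain ⟨φ, rfl | rfl⟩ := hz
        · exact absurd ⟨bfp_P hm φ, hP⟩ (hnotboth _ (bfp_mem k φ))
        · exact ⟨φ, rfl⟩
      · rintro ⟨φ, rfl⟩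
        exact ⟨bfn_mem k φ, bfn_P hm φ⟩
    -- work in the subtype
    set Up : Set (axisFixedSet k) :=
      {x | (x : Fin 4 → ℂ) 1 = Complex.I * (x : Fin 4 → ℂ) 0 ^ m} with hUpdef
    set Down : Set (axisFixedSet k) :=
      {x | (x : Fin 4 → ℂ) 1 = -(Complex.I * (x : Fin 4 → ℂ) 0 ^ m)} with hDowndef
    have hvalUp : Subtype.val '' Up = {z | z ∈ axisFixedSet k ∧ z 1 = Complex.I * z 0 ^ m} := by
      ext z
      constructor
      · rintro ⟨⟨w, hw⟩, hPw, rfl⟩; exact ⟨hw, hPw⟩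
      · rintro ⟨hz, hP⟩; exact ⟨⟨z, hz⟩, hP, rfl⟩
    have hvalDown : Subtype.val '' Down
        = {z | z ∈ axisFixedSet k ∧ z 1 = -(Complex.I * z 0 ^ m)} := by
      ext z
      constructor
      · rintro ⟨⟨w, hw⟩, hPw, rfl⟩; exact ⟨hw, hPw⟩
      · rintro ⟨hz, hP⟩; exact ⟨⟨z, hz⟩, hP, rfl⟩
    have hUpPre : IsPreconnected Up := by
      rw [← Topology.IsInducing.subtypeVal.isPreconnected_image, hvalUp, hCpos]
      exact isPreconnected_range (bfp_cont k)
    have hDownPre : IsPreconnected Down := by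
      rw [← Topology.IsInducing.subtypeVal.isPreconnected_image, hvalDown, hCneg]
      exact isPreconnected_range (bfn_cont k)
    have hUpCompl : Upᶜ = Down := by
      ext x
      simp only [Set.mem_compl_iff, hUpdef, hDowndef, Set.mem_setOf_eq]
      constructor
      · intro h
        rcases hcases x.val x.2 with hP | hN
        · exact absurd hP h
        · exact hN
      · intro h hP
        exact hnotboth x.val x.2 ⟨hP, h⟩
    have hc1 : Continuous fun x : axisFixedSet k => (x : Fin 4 → ℂ) 1 :=
      (continuous_apply 1).comp continuous_subtype_val
    have hc0 : Continuous fun x : axisFixedSet k => Complex.I * (x : Fin 4 → ℂ) 0 ^ m :=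
      continuous_const.mul (((continuous_apply 0).comp continuous_subtype_val).pow m)
    have hUpClosed : IsClosed Up := isClosed_eq hc1 hc0
    have hDownClosed : IsClosed Down := isClosed_eq hc1 (hc0.neg)
    have hUpOpen : IsOpen Up := by
      rw [← isClosed_compl_iff, hUpCompl]; exact hDownClosed
    have hUpClopen : IsClopen Up := ⟨hUpClosed, hUpOpen⟩
    -- the locally constant branch function
    set g : axisFixedSet k → Fin 2 := Up.piecewise (fun _ => 0) (fun _ => 1) with hgdef
    have hgc : Continuous g := by
      refine Continuous.piecewise ?_ continuous_const continuous_const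
      rw [hUpClopen.frontier_eq]
      simp
    refine ⟨Equiv.ofBijective hgc.connectedComponentsLift ⟨?_, ?_⟩⟩
    · -- injective
      intro x y hxy
      obtain ⟨a, rfl⟩ := ConnectedComponents.surjective_coe x
      obtain ⟨b, rfl⟩ := ConnectedComponents.surjective_coe y
      rw [Continuous.connectedComponentsLift_apply_coe,
        Continuous.connectedComponentsLift_apply_coe] at hxy
      by_cases ha : a ∈ Up <;> by_cases hb : b ∈ Up
      · exact ConnectedComponents.coe_eq_coe'.mpr (hUpPre.subset_connectedComponent hb ha)
      · rw [hgdef] at hxy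
        rw [Set.piecewise_eq_of_mem _ _ _ ha, Set.piecewise_eq_of_notMem _ _ _ hb] at hxy
        exact absurd hxy (by decide)
      · rw [hgdef] at hxy
        rw [Set.piecewise_eq_of_notMem _ _ _ ha, Set.piecewise_eq_of_mem _ _ _ hb] at hxy
        exact absurd hxy (by decide)
      · have ha' : a ∈ Down := hUpCompl ▸ ha
        have hb' : b ∈ Down := hUpCompl ▸ hb
        exact ConnectedComponents.coe_eq_coe'.mpr (hDownPre.subset_connectedComponent hb' ha')
    · -- surjective
      intro i
      fin_cases i
      · refine ⟨ConnectedComponents.mk ⟨bfp k 0, bfp_mem k 0⟩, ?_⟩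
        rw [Continuous.connectedComponentsLift_apply_coe, hgdef]
        exact Set.piecewise_eq_of_mem _ _ _ (bfp_P hm 0)
      · refine ⟨ConnectedComponents.mk ⟨bfn k 0, bfn_mem k 0⟩, ?_⟩
        rw [Continuous.connectedComponentsLift_apply_coe, hgdef]
        refine Set.piecewise_eq_of_notMem _ _ _ ?_
        intro hP
        exact hnotboth _ (bfn_mem k 0) ⟨hP, bfn_P hm 0⟩
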